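/- If u is a TV flow solution with datum f ∈ ℝ^V, then a stationary solution is reached in finite time: there exists T ≥ 0 such that for all t ≥ T and all v ∈ V, u(t)(v) = (1/|V|) Σ_{w∈V} f(w). -/

import Mathlib

open Finset MeasureTheory

noncomputable section

/-- The graph total variation `J(u) = ∑_{(v,w) ∈ E} |u(w) - u(v)|`. -/
def tvJ {V : Type*} (E : Finset (V × V)) (u : V → ℝ) : ℝ :=
  ∑ e ∈ E, |u e.2 - u e.1|

/-- The subdifferential of the graph total variation at `u`. -/
def subdiffJ {V : Type*} [Fintype V] (E : Finset (V × V)) (u : V → ℝ) : Set (V → ℝ) :=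
  {us | ∀ h : V → ℝ, (∑ v, (h v - u v) * us v) + tvJ E u ≤ tvJ E h}

/-- The divergence of an edge function `H`:
`(div H)(v) = ∑_{(w,v) ∈ E} H((w,v)) - ∑_{(v,w) ∈ E} H((v,w))`. -/
def gdiv {V : Type*} [DecidableEq V] (E : Finset (V × V)) (H : V × V → ℝ) : V → ℝ :=
  fun v => (∑ e ∈ E, if e.2 = v then H e else 0) - (∑ e ∈ E, if e.1 = v then H e else 0)

/-- The ℓ² norm on `ℝ^V`. -/
def norm2 {V : Type*} [Fintype V] (u : V → ℝ) : ℝ :=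
  Real.sqrt (∑ v, (u v) ^ 2)

/-- `u` minimizes `w ↦ ½‖f - w‖₂² + α J(w)` over `ℝ^V`. -/
def IsROFMinimizer {V : Type*} [Fintype V] (E : Finset (V × V)) (f : V → ℝ) (α : ℝ)
    (u : V → ℝ) : Prop :=
  ∀ w : V → ℝ,
    (1 / 2) * (∑ v, (f v - u v) ^ 2) + α * tvJ E u ≤
      (1 / 2) * (∑ v, (f v - w v) ^ 2) + α * tvJ E w

/-- `u : [0,∞) → ℝ^V` is a TV flow solution with datum `f`: it is Lipschitz on `[0,∞)`,
`u(0) = f`, and `-u'(t) ∈ ∂J(u(t))` for almost every `t > 0`. -/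
def IsTVFlowSolution {V : Type*} [Fintype V] (E : Finset (V × V)) (f : V → ℝ)
    (u : ℝ → V → ℝ) : Prop :=
  u 0 = f ∧ (∃ L : NNReal, LipschitzOnWith L u (Set.Ici 0)) ∧
    ∃ u' : ℝ → V → ℝ, ∀ᵐ t ∂(volume : Measure ℝ), 0 < t →
      HasDerivAt u (u' t) t ∧ (fun v => -(u' t v)) ∈ subdiffJ E (u t)

section AuxGrowth
open Set Filter Topology


lemma growth_of_ae_deriv_le {g g' : ℝ → ℝ} {a b C K : ℝ} (hab : a ≤ b) (hK : 0 ≤ K)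
    (hg : ∀ x ∈ Set.Icc a b, ∀ y ∈ Set.Icc a b, |g x - g y| ≤ K * |x - y|)
    (hae : ∀ᵐ t ∂(volume : Measure ℝ), t ∈ Set.Ioo a b → HasDerivAt g (g' t) t ∧ g' t ≤ C) :
    g b - g a ≤ C * (b - a) := by
  rcases eq_or_lt_of_le hab with rfl | hab'
  · simp
  set K' : ℝ := K + |C| + 1 with hK'def
  have hK'pos : 0 < K' := by have := abs_nonneg C; rw [hK'def]; linarith
  set M : ℝ := K + K' + |C| + 2 * (b - a) + 1 with hMdef
  have hMpos : 0 < M := by have := abs_nonneg C; rw [hMdef, hK'def]; linarith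
  have key : ∀ δ : ℝ, 0 < δ → g b - g a ≤ C * (b - a) + δ * M := by
    intro δ hδ
    -- null set of bad points
    set N : Set ℝ := {t | ¬ (t ∈ Set.Ioo a b → HasDerivAt g (g' t) t ∧ g' t ≤ C)} with hNdef
    have hN0 : volume N = 0 := hae
    obtain ⟨U, hNU, hUopen, hUμ⟩ := Set.exists_isOpen_lt_of_lt N (ENNReal.ofReal δ)
      (by rw [hN0]; exact ENNReal.ofReal_pos.2 hδ)
    have hUmeas : MeasurableSet U := hUopen.measurableSet
    have hUfin : volume U < ⊤ := hUμ.trans_le le_top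
    set a' : ℝ := min (a + δ) ((a + b) / 2) with ha'def
    have ha'1 : a < a' := lt_min (by linarith) (by linarith)
    have ha'2 : a' < b := (min_le_right _ _).trans_lt (by linarith)
    have ha'3 : a' - a ≤ δ := by
      have := min_le_left (a + δ) ((a + b) / 2); simp only [← ha'def] at this; linarith
    set m : ℝ → ℝ := fun x => (volume (U ∩ Set.Ioc a' x)).toReal with hmdef
    have hfin : ∀ x, volume (U ∩ Set.Ioc a' x) ≠ ⊤ :=
      fun x => ((measure_mono inter_subset_left).trans_lt hUfin).ne
    have hadd : ∀ x y, a' ≤ x → x ≤ y →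
        m y = m x + (volume (U ∩ Set.Ioc x y)).toReal := by
      intro x y hx hxy
      have hsplit : U ∩ Set.Ioc a' y = (U ∩ Set.Ioc a' x) ∪ (U ∩ Set.Ioc x y) := by
        rw [← Set.inter_union_distrib_left, Set.Ioc_union_Ioc_eq_Ioc hx hxy]
      have hdisj : Disjoint (U ∩ Set.Ioc a' x) (U ∩ Set.Ioc x y) :=
        (Set.Ioc_disjoint_Ioc_of_le le_rfl).mono inter_subset_right inter_subset_right
      have : volume (U ∩ Set.Ioc a' y)
          = volume (U ∩ Set.Ioc a' x) + volume (U ∩ Set.Ioc x y) := by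
        rw [hsplit, measure_union hdisj (hUmeas.inter measurableSet_Ioc)]
      simp only [hmdef, this]
      rw [ENNReal.toReal_add (hfin x) (((measure_mono Set.inter_subset_left).trans_lt hUfin).ne)]
    have hioc_le : ∀ x y : ℝ, (volume (U ∩ Set.Ioc x y)).toReal ≤ y - x ∨ y ≤ x := by
      intro x y
      rcases le_or_gt y x with h | h
      · right; exact h
      · left
        have h1 : volume (U ∩ Set.Ioc x y) ≤ ENNReal.ofReal (y - x) := by
          calc volume (U ∩ Set.Ioc x y) ≤ volume (Set.Ioc x y) := measure_mono inter_subset_right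
          _ = ENNReal.ofReal (y - x) := Real.volume_Ioc
        exact ENNReal.toReal_le_of_le_ofReal (by linarith) h1
    have hmono : ∀ x y, a' ≤ x → x ≤ y → m x ≤ m y := by
      intro x y hx hxy; rw [hadd x y hx hxy]; exact le_add_of_nonneg_right ENNReal.toReal_nonneg
    have hm0 : m a' = 0 := by simp [hmdef]
    have hmb : m b ≤ δ := by
      have h1 : volume (U ∩ Set.Ioc a' b) ≤ ENNReal.ofReal δ :=
        (measure_mono Set.inter_subset_left).trans hUμ.le
      exact ENNReal.toReal_le_of_le_ofReal hδ.le h1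
    have hmlip : ∀ x y, a' ≤ x → x ≤ y → m y - m x ≤ y - x := by
      intro x y hx hxy
      rw [hadd x y hx hxy]
      rcases hioc_le x y with h | h
      · linarith
      · have : x = y := le_antisymm hxy h
        subst this; simp
    have hcont_m : ContinuousOn m (Set.Icc a' b) := by
      have : LipschitzOnWith 1 m (Set.Ici a') := by
        apply LipschitzOnWith.of_dist_le_mul
        intro x hx y hy
        simp only [Real.dist_eq, NNReal.coe_one, one_mul]
        rcases le_total x y with h | h
        · have h1 := hmlip x y hx h
          have h2 := hmono x y hx h
          rw [abs_of_nonpos (by linarith), abs_of_nonpos (by linarith)]; linarith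
        · have h1 := hmlip y x hy h
          have h2 := hmono y x hy h
          rw [abs_of_nonneg (by linarith), abs_of_nonneg (by linarith)]; linarith
      exact this.continuousOn.mono (Set.Icc_subset_Ici_self)
    have hsub_ab : Set.Icc a' b ⊆ Set.Icc a b := Set.Icc_subset_Icc ha'1.le le_rfl
    have hcont_g : ContinuousOn g (Set.Icc a b) := by
      have : LipschitzOnWith K.toNNReal g (Set.Icc a b) := by
        apply LipschitzOnWith.of_dist_le_mul
        intro x hx y hy
        simp only [Real.dist_eq, Real.coe_toNNReal K hK]
        exact hg x hx y hy
      exact this.continuousOn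
    set f : ℝ → ℝ := fun x => g x - K' * m x with hfdef
    have hcont_f : ContinuousOn f (Set.Icc a' b) :=
      (hcont_g.mono hsub_ab).sub (continuousOn_const.mul hcont_m)
    set B : ℝ → ℝ := fun x => g a' + (C + 2 * δ) * (x - a') with hBdef
    have hB : ∀ x, HasDerivAt B (C + 2 * δ) x := by
      intro x
      have h1 : HasDerivAt (fun x : ℝ => (C + 2 * δ) * (x - a')) ((C + 2 * δ) * 1) x :=
        ((hasDerivAt_id x).sub_const a').const_mul _
      exact (by simpa using h1.const_add (g a') :
        HasDerivAt (fun x => g a' + (C + 2 * δ) * (x - a')) (C + 2 * δ) x)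
    have main : f b ≤ B b := by
      have := image_le_of_liminf_slope_right_lt_deriv_boundary (f := f)
        (f' := fun _ => C + δ) (a := a') (b := b) (B := B) (B' := fun _ => C + 2 * δ)
        hcont_f ?_ (by simp [hfdef, hBdef, hm0]) hB ?_
      · exact this (Set.right_mem_Icc.2 ha'2.le)
      · -- slope estimate
        intro x hx r hr
        have hr0 : C + δ < r := hr
        by_cases hxU : x ∈ U
        · obtain ⟨η, hη, hball⟩ := Metric.isOpen_iff.1 hUopen x hxU
          have hxb : x < min (x + η) b := lt_min (by linarith) hx.2
          have hmem : Set.Ioo x (min (x + η) b) ∈ 𝓝[>] x :=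
            Ioo_mem_nhdsGT_of_mem ⟨le_rfl, hxb⟩
          apply Filter.Eventually.frequently
          filter_upwards [hmem] with z hz
          have hzx : x < z := hz.1
          have hzb : z < b := hz.2.trans_le (min_le_right _ _)
          have hzη : z < x + η := hz.2.trans_le (min_le_left _ _)
          have hsubU : Set.Ioc x z ⊆ U := by
            intro w hw
            apply hball
            rw [Metric.mem_ball, Real.dist_eq, abs_of_pos (by linarith [hw.1] : (0:ℝ) < w - x)]
            linarith [hw.2]
          have hmz : m z - m x = z - x := by
            rw [hadd x z hx.1 hzx.le, Set.inter_eq_self_of_subset_right hsubU]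
            rw [Real.volume_Ioc, ENNReal.toReal_ofReal (by linarith)]
            ring
          have hgz : g z - g x ≤ K * (z - x) := by
            have := hg z (hsub_ab ⟨hx.1.trans hzx.le, hzb.le⟩)
              x (hsub_ab ⟨hx.1, hx.2.le⟩)
            calc g z - g x ≤ |g z - g x| := le_abs_self _
            _ ≤ K * |z - x| := this
            _ = K * (z - x) := by rw [abs_of_pos (by linarith)]
          rw [slope_def_field, div_lt_iff₀ (by linarith : (0:ℝ) < z - x)]
          have hr' : -|C| - 1 < r := by
            have : -|C| ≤ C := neg_abs_le C
            linarith [hr0]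
          have hfz : f z - f x = (g z - g x) - K' * (z - x) := by
            simp only [hfdef]; rw [← hmz]; ring
          have h2 : (-|C| - 1) * (z - x) < r * (z - x) :=
            mul_lt_mul_of_pos_right hr' (by linarith)
          calc f z - f x = (g z - g x) - K' * (z - x) := hfz
          _ ≤ K * (z - x) - K' * (z - x) := by linarith
          _ = (-|C| - 1) * (z - x) := by rw [hK'def]; ring
          _ < r * (z - x) := h2
        · -- good point, derivative exists
          have hxN : x ∉ N := fun h => hxU (hNU h)
          have hxIoo : x ∈ Set.Ioo a b := ⟨ha'1.trans_le hx.1, hx.2⟩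
          have hP : HasDerivAt g (g' x) x ∧ g' x ≤ C := (not_not.1 hxN) hxIoo
          obtain ⟨hdx, hgC⟩ := hP
          have ht : Tendsto (slope g x) (𝓝[>] x) (𝓝 (g' x)) :=
            (hasDerivAt_iff_tendsto_slope.1 hdx).mono_left
              (nhdsWithin_mono x (fun z hz => ne_of_gt hz))
          have ev1 : ∀ᶠ z in 𝓝[>] x, slope g x z < r :=
            ht.eventually_lt_const (hgC.trans_lt (by linarith [hr0]))
          apply Filter.Eventually.frequently
          filter_upwards [ev1, self_mem_nhdsWithin] with z hz1 hz2
          have hzx : x < z := hz2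
          have hmxz : m x ≤ m z := hmono x z hx.1 hzx.le
          have : slope f x z = slope g x z - K' * ((m z - m x) / (z - x)) := by
            simp only [slope_def_field, hfdef]; ring
          rw [this]
          have h3 : 0 ≤ K' * ((m z - m x) / (z - x)) :=
            mul_nonneg hK'pos.le (div_nonneg (by linarith) (by linarith))
          linarith
      · intro x _ _; show C + δ < C + 2 * δ; linarith
    -- unwind
    have h1 : g a' - g a ≤ K * δ := by
      have := hg a' (hsub_ab (Set.left_mem_Icc.2 ha'2.le)) a (Set.left_mem_Icc.2 hab)
      calc g a' - g a ≤ |g a' - g a| := le_abs_self _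
      _ ≤ K * |a' - a| := this
      _ ≤ K * δ := by
        apply mul_le_mul_of_nonneg_left _ hK
        rw [abs_of_pos (by linarith)]; exact ha'3
    have h2 : 0 ≤ m b := by positivity
    have h3 : K' * m b ≤ K' * δ := mul_le_mul_of_nonneg_left hmb hK'pos.le
    have h4 : f b = g b - K' * m b := rfl
    have h5 : B b = g a' + (C + 2 * δ) * (b - a') := rfl
    have h6 : (C + 2 * δ) * (b - a') ≤ C * (b - a) + |C| * δ + 2 * δ * (b - a) := by
      have hCa : C * (b - a') = C * (b - a) - C * (a' - a) := by ring
      have hC1 : -C * (a' - a) ≤ |C| * (a' - a) := by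
        have : -C ≤ |C| := neg_le_abs C
        apply mul_le_mul_of_nonneg_right this (by linarith)
      have hC2 : |C| * (a' - a) ≤ |C| * δ :=
        mul_le_mul_of_nonneg_left ha'3 (abs_nonneg C)
      have hC3 : 2 * δ * (b - a') ≤ 2 * δ * (b - a) := by nlinarith
      nlinarith
    rw [h4, h5] at main
    rw [hMdef]
    nlinarith
  -- conclude
  have := le_of_forall_pos_le_add (a := g b - g a) (b := C * (b - a)) ?_
  · exact this
  intro ε hε
  have := key (ε / M) (by positivity)
  calc g b - g a ≤ C * (b - a) + ε / M * M := this
  _ = C * (b - a) + ε := by rw [div_mul_cancel₀]; exact hMpos.ne'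

end AuxGrowth

lemma tvJ_nonneg {V : Type*} (E : Finset (V × V)) (u : V → ℝ) : 0 ≤ tvJ E u :=
  Finset.sum_nonneg fun _ _ => abs_nonneg _

lemma tvJ_sub_const {V : Type*} (E : Finset (V × V)) (u : V → ℝ) (c : ℝ) :
    tvJ E (fun v => u v - c) = tvJ E u := by
  unfold tvJ; apply Finset.sum_congr rfl; intro e _; ring_nf

lemma tvJ_const_eq_zero {V : Type*} (E : Finset (V × V)) (c : ℝ) :
    tvJ E (fun _ => c) = 0 := by simp [tvJ]

lemma tvJ_smul {V : Type*} (E : Finset (V × V)) (u : V → ℝ) (r : ℝ) (hr : 0 ≤ r) :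
    tvJ E (fun v => r * u v) = r * tvJ E u := by
  unfold tvJ
  rw [Finset.mul_sum]
  apply Finset.sum_congr rfl
  intro e _
  rw [← mul_sub, abs_mul, abs_of_nonneg hr]

lemma eq_of_walk {V : Type*} (E : Finset (V × V)) (w : V → ℝ)
    (h : ∀ e ∈ E, w e.2 = w e.1) {x y : V}
    (p : (SimpleGraph.fromRel (fun v w : V => (v, w) ∈ E)).Walk x y) : w x = w y := by
  induction p with
  | nil => rfl
  | cons ha p ih =>
    rename_i a b c
    rw [← ih]
    rw [SimpleGraph.fromRel_adj] at ha
    rcases ha.2 with h1 | h1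
    · exact (h (a, b) h1).symm
    · exact h (b, a) h1

lemma poincare {V : Type*} [Fintype V] [DecidableEq V] [Nonempty V] (E : Finset (V × V))
    (hconn : (SimpleGraph.fromRel (fun v w : V => (v, w) ∈ E)).Connected) :
    ∃ c : ℝ, 0 < c ∧ ∀ w : V → ℝ, (∑ v, w v) = 0 →
      c * Real.sqrt (∑ v, (w v) ^ 2) ≤ tvJ E w := by
  have hconst : ∀ w : V → ℝ, tvJ E w = 0 → (∑ v, w v) = 0 → w = 0 := by
    intro w hJ hsum
    have hedge : ∀ e ∈ E, w e.2 = w e.1 := by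
      have := (Finset.sum_eq_zero_iff_of_nonneg (fun e _ => abs_nonneg (w e.2 - w e.1))).1 hJ
      intro e he
      have := this e he
      rw [abs_eq_zero, sub_eq_zero] at this
      exact this
    have hcst : ∀ x y : V, w x = w y := by
      intro x y
      obtain ⟨p⟩ := hconn.preconnected x y
      exact eq_of_walk E w hedge p
    funext v
    have : (∑ x, w x) = (Fintype.card V : ℝ) * w v := by
      rw [Finset.sum_congr rfl (fun x _ => hcst x v)]
      simp [Finset.card_univ, mul_comm]
    rw [hsum] at this
    have hcard : (0:ℝ) < (Fintype.card V : ℝ) := by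
      exact_mod_cast Fintype.card_pos
    have hwv : w v = 0 := by
      rcases mul_eq_zero.1 this.symm with h | h
      · exact absurd h hcard.ne'
      · exact h
    simp only [Pi.zero_apply]
    exact hwv
  -- scaling reduction
  have hscale : ∀ (c : ℝ), 0 < c →
      (∀ w : V → ℝ, (∑ v, w v) = 0 → (∑ v, (w v)^2) = 1 → c ≤ tvJ E w) →
      (∀ w : V → ℝ, (∑ v, w v) = 0 → c * Real.sqrt (∑ v, (w v) ^ 2) ≤ tvJ E w) := by
    intro c hc hK w hw
    by_cases hs : (∑ v, (w v)^2) = 0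
    · rw [hs, Real.sqrt_zero, mul_zero]; exact tvJ_nonneg E w
    · have hs0 : 0 < ∑ v, (w v)^2 :=
        lt_of_le_of_ne (Finset.sum_nonneg fun v _ => sq_nonneg _) (Ne.symm hs)
      set r : ℝ := Real.sqrt (∑ v, (w v)^2) with hrdef
      have hr : 0 < r := Real.sqrt_pos.2 hs0
      have hr2 : r ^ 2 = ∑ v, (w v)^2 := Real.sq_sqrt hs0.le
      have h1 : c ≤ tvJ E (fun v => r⁻¹ * w v) := by
        apply hK
        · rw [← Finset.mul_sum, hw, mul_zero]
        · have : (∑ v, (r⁻¹ * w v)^2) = r⁻¹^2 * ∑ v, (w v)^2 := by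
            rw [Finset.mul_sum]; apply Finset.sum_congr rfl; intro v _; ring
          rw [this, ← hr2]
          field_simp
      rw [tvJ_smul E w r⁻¹ (by positivity)] at h1
      calc c * r ≤ (r⁻¹ * tvJ E w) * r := mul_le_mul_of_nonneg_right h1 hr.le
      _ = tvJ E w := by field_simp
  by_cases hne : ∃ w : V → ℝ, (∑ v, w v) = 0 ∧ (∑ v, (w v)^2) = 1
  · obtain ⟨w1, hw1, hw1'⟩ := hne
    set K : Set (V → ℝ) := {w | (∑ v, w v) = 0 ∧ (∑ v, (w v)^2) = 1} with hKdef
    have hKclosed : IsClosed K := by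
      apply IsClosed.inter
      · exact isClosed_eq (continuous_finset_sum _ (fun v _ => continuous_apply v))
          continuous_const
      · exact isClosed_eq (continuous_finset_sum _ (fun v _ => (continuous_apply v).pow 2))
          continuous_const
    have hKbdd : K ⊆ Metric.closedBall 0 1 := by
      intro w hw
      rw [Metric.mem_closedBall, dist_zero_right]
      rw [pi_norm_le_iff_of_nonneg (by norm_num)]
      intro v
      have h1 : (w v)^2 ≤ 1 := by
        rw [← hw.2]
        exact Finset.single_le_sum (f := fun v => (w v)^2) (fun i _ => sq_nonneg _)
          (Finset.mem_univ v)
      have := Real.sqrt_le_sqrt h1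
      rwa [Real.sqrt_sq_eq_abs, Real.sqrt_one] at this
    have hKcompact : IsCompact K :=
      (isCompact_closedBall (0 : V → ℝ) 1).of_isClosed_subset hKclosed hKbdd
    have hJcont : Continuous (tvJ E) := by
      unfold tvJ
      apply continuous_finset_sum
      intro e _
      exact ((continuous_apply e.2).sub (continuous_apply e.1)).abs
    obtain ⟨w0, hw0K, hmin'⟩ := hKcompact.exists_isMinOn (⟨w1, ⟨hw1, hw1'⟩⟩ : K.Nonempty)
      hJcont.continuousOn
    have hmin : ∀ w ∈ K, tvJ E w0 ≤ tvJ E w := fun w hw => hmin' hw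
    refine ⟨tvJ E w0, ?_, hscale _ ?_ ?_⟩
    · rcases lt_or_eq_of_le (tvJ_nonneg E w0) with h | h
      · exact h
      · exfalso
        have h0 := hw0K.2
        rw [hconst w0 h.symm hw0K.1] at h0
        simp at h0
    · rcases lt_or_eq_of_le (tvJ_nonneg E w0) with h | h
      · exact h
      · exfalso
        have h0 := hw0K.2
        rw [hconst w0 h.symm hw0K.1] at h0
        simp at h0
    · intro w hw hw'
      exact hmin w ⟨hw, hw'⟩

  · refine ⟨1, one_pos, hscale 1 one_pos ?_⟩
    intro w hw hw'
    exact absurd ⟨w, hw, hw'⟩ hne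

lemma hasDerivAt_eval {V : Type*} [Fintype V] {u : ℝ → V → ℝ} {D : V → ℝ} {t : ℝ}
    (h : HasDerivAt u D t) (v : V) : HasDerivAt (fun s => u s v) (D v) t := by
  have h1 := hasFDerivAt_pi'.1 h.hasFDerivAt v
  have h2 := h1.hasDerivAt
  simpa [ContinuousLinearMap.proj_apply, ContinuousLinearMap.smulRight_apply,
    ContinuousLinearMap.one_apply] using h2

/-- a TV flow solution reaches the mean of the datum in finite time. -/
theorem tvflow_reaches_mean_in_finite_time
    {V : Type*} [Fintype V] [DecidableEq V] [Nonempty V] (E : Finset (V × V))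
    (hE : ∀ v w : V, (v, w) ∈ E → (w, v) ∉ E)
    (hconn : (SimpleGraph.fromRel (fun v w : V => (v, w) ∈ E)).Connected)
    (f : V → ℝ) (u : ℝ → V → ℝ) (hu : IsTVFlowSolution E f u) :
    ∃ T : ℝ, 0 ≤ T ∧ ∀ t : ℝ, T ≤ t →
      ∀ v : V, u t v = (1 / (Fintype.card V : ℝ)) * ∑ w, f w := by
  obtain ⟨hu0, ⟨L, hL⟩, u', hu'⟩ := hu
  set n : ℝ := (Fintype.card V : ℝ) with hndef
  have hn : 0 < n := by rw [hndef]; exact_mod_cast Fintype.card_pos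
  set mval : ℝ := (1 / n) * ∑ w, f w with hmvaldef
  obtain ⟨c, hc, hpoin⟩ := poincare E hconn
  -- component Lipschitz bound
  have hcomp : ∀ (v : V) (s t : ℝ), 0 ≤ s → 0 ≤ t → |u s v - u t v| ≤ (L : ℝ) * |s - t| := by
    intro v s t hs ht
    have h1 := hL.dist_le_mul s hs t ht
    calc |u s v - u t v| = dist (u s v) (u t v) := (Real.dist_eq _ _).symm
    _ ≤ dist (u s) (u t) := dist_le_pi_dist _ _ v
    _ ≤ (L : ℝ) * dist s t := h1
    _ = (L : ℝ) * |s - t| := by rw [Real.dist_eq]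
  set E' : ℝ → ℝ := fun s => ∑ v, 2 * (u s v - mval) * u' s v with hE'def
  set Efun : ℝ → ℝ := fun s => ∑ v, (u s v - mval) ^ 2 with hEfundef
  have hEnonneg : ∀ s, 0 ≤ Efun s := fun s => Finset.sum_nonneg fun v _ => sq_nonneg _
  -- main a.e. facts
  have hkey : ∀ᵐ s ∂(volume : Measure ℝ), 0 < s →
      (HasDerivAt (fun r => ∑ v, u r v) 0 s) ∧
      HasDerivAt Efun (E' s) s ∧ E' s ≤ -2 * tvJ E (u s) := by
    filter_upwards [hu'] with s hs hspos
    obtain ⟨hd, hsubm⟩ := hs hspos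
    have hsubm' : ∀ h : V → ℝ,
        (∑ v, (h v - u s v) * (-(u' s v))) + tvJ E (u s) ≤ tvJ E h := hsubm
    have hdv : ∀ v : V, HasDerivAt (fun r => u r v) (u' s v) s :=
      fun v => hasDerivAt_eval hd v
    constructor
    · -- derivative of the sum is 0
      have hdsum : HasDerivAt (fun r => ∑ v, u r v) (∑ v, u' s v) s :=
        HasDerivAt.fun_sum fun v _ => hdv v
      have hsum0 : (∑ v, u' s v) = 0 := by
        have h1 := hsubm' (fun v => u s v + 1)
        have h2 := hsubm' (fun v => u s v - 1)
        have e1 : tvJ E (fun v => u s v + 1) = tvJ E (u s) := by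
          have := tvJ_sub_const E (fun v => u s v + 1) 1
          simpa using this.symm
        have e2 : tvJ E (fun v => u s v - 1) = tvJ E (u s) := tvJ_sub_const E (u s) 1
        have c1 : (∑ v, ((u s v + 1) - u s v) * (-(u' s v))) = -∑ v, u' s v := by
          rw [← Finset.sum_neg_distrib]
          apply Finset.sum_congr rfl; intro v _; ring
        have c2 : (∑ v, ((u s v - 1) - u s v) * (-(u' s v))) = ∑ v, u' s v := by
          apply Finset.sum_congr rfl; intro v _; ring
        rw [e1, c1] at h1
        rw [e2, c2] at h2
        linarith
      rwa [hsum0] at hdsum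
    constructor
    · -- derivative of Efun
      have hdE : HasDerivAt Efun (∑ v, ((2:ℕ) : ℝ) * (u s v - mval) ^ (2 - 1) * u' s v) s := by
        apply HasDerivAt.fun_sum
        intro v _
        exact ((hdv v).sub_const mval).pow 2
      have : (∑ v, ((2:ℕ) : ℝ) * (u s v - mval) ^ (2 - 1) * u' s v) = E' s := by
        apply Finset.sum_congr rfl; intro v _; push_cast; ring
      rwa [this] at hdE
    · -- dissipation inequality
      have hip := hsubm' (fun _ => mval)
      rw [tvJ_const_eq_zero] at hip
      have hswap : (∑ v, (mval - u s v) * (-(u' s v))) = ∑ v, (u s v - mval) * u' s v := by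
        apply Finset.sum_congr rfl; intro v _; ring
      rw [hswap] at hip
      have hEexp : E' s = 2 * ∑ v, (u s v - mval) * u' s v := by
        rw [hE'def, Finset.mul_sum]
        apply Finset.sum_congr rfl; intro v _; ring
      rw [hEexp]
      linarith
  -- slope bound for the sum function
  have hgsum : ∀ b : ℝ, ∀ x ∈ Set.Icc (0:ℝ) b, ∀ y ∈ Set.Icc (0:ℝ) b,
      |(∑ v, u x v) - ∑ v, u y v| ≤ (n * L) * |x - y| := by
    intro b x hx y hy
    calc |(∑ v, u x v) - ∑ v, u y v| = |∑ v, (u x v - u y v)| := by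
          rw [Finset.sum_sub_distrib]
    _ ≤ ∑ v, |u x v - u y v| := Finset.abs_sum_le_sum_abs _ _
    _ ≤ ∑ _v : V, (L : ℝ) * |x - y| :=
        Finset.sum_le_sum fun v _ => hcomp v x y hx.1 hy.1
    _ = (n * L) * |x - y| := by
        rw [Finset.sum_const, Finset.card_univ, nsmul_eq_mul, hndef]; ring
  have hnL : (0:ℝ) ≤ n * L := by positivity
  -- mean preservation
  have hmean : ∀ t : ℝ, 0 ≤ t → (∑ v, u t v) = ∑ v, f v := by
    intro t ht
    have h1 : (∑ v, u t v) - (∑ v, u 0 v) ≤ 0 * (t - 0) := by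
      apply growth_of_ae_deriv_le ht hnL (hgsum t)
      filter_upwards [hkey] with s hs hsIoo
      exact ⟨(hs hsIoo.1).1, le_rfl⟩
    have h2 : (-(∑ v, u t v)) - (-(∑ v, u 0 v)) ≤ 0 * (t - 0) := by
      apply growth_of_ae_deriv_le (g := fun r => -(∑ v, u r v)) (g' := fun _ => 0) ht hnL
      · intro x hx y hy
        have := hgsum t y hy x hx
        calc |(-(∑ v, u x v)) - (-(∑ v, u y v))| = |(∑ v, u y v) - ∑ v, u x v| := by
              rw [neg_sub_neg]
        _ ≤ (n * L) * |y - x| := this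
        _ = (n * L) * |x - y| := by rw [abs_sub_comm]
      · filter_upwards [hkey] with s hs hsIoo
        refine ⟨?_, le_rfl⟩
        simpa using ((hs hsIoo.1).1).fun_neg
    rw [hu0] at h1 h2
    simp only [zero_mul] at h1 h2
    have h1' : (∑ v, u t v) ≤ ∑ v, f v := by linarith
    have h2' : (∑ v, f v) ≤ ∑ v, u t v := by linarith
    linarith
  have hsum_zero : ∀ t : ℝ, 0 ≤ t → (∑ v, (u t v - mval)) = 0 := by
    intro t ht
    rw [Finset.sum_sub_distrib, hmean t ht, Finset.sum_const, Finset.card_univ, nsmul_eq_mul,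
      hmvaldef, ← hndef]
    field_simp
    ring
  -- slope bound for Efun on [0, b]
  have hgE : ∀ b : ℝ, 0 ≤ b → ∀ x ∈ Set.Icc (0:ℝ) b, ∀ y ∈ Set.Icc (0:ℝ) b,
      |Efun x - Efun y| ≤ (n * (2 * (‖f‖ + |mval| + L * b) * L)) * |x - y| := by
    intro b hb x hx y hy
    set Bb : ℝ := ‖f‖ + |mval| + L * b with hBbdef
    have habs : ∀ z ∈ Set.Icc (0:ℝ) b, ∀ v : V, |u z v - mval| ≤ Bb := by
      intro z hz v
      have h1 : |u z v - u 0 v| ≤ (L:ℝ) * |z - 0| := hcomp v z 0 hz.1 le_rfl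
      have h2 : |u 0 v| ≤ ‖f‖ := by
        rw [hu0]
        exact norm_le_pi_norm f v
      have h3 : (L:ℝ) * |z - 0| ≤ L * b := by
        rw [sub_zero, abs_of_nonneg hz.1]
        exact mul_le_mul_of_nonneg_left hz.2 L.2
      have hsplit : u z v - mval = (u z v - u 0 v) + (u 0 v - mval) := by ring
      calc |u z v - mval| = |(u z v - u 0 v) + (u 0 v - mval)| := by rw [hsplit]
      _ ≤ |u z v - u 0 v| + |u 0 v - mval| := abs_add_le _ _
      _ ≤ |u z v - u 0 v| + (|u 0 v| + |mval|) := by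
          linarith [abs_sub (u 0 v) mval]
      _ ≤ Bb := by rw [hBbdef]; linarith
    have hBb : 0 ≤ Bb := le_trans (abs_nonneg (u x _ - mval)) (habs x hx (Classical.arbitrary V))
    calc |Efun x - Efun y| = |∑ v, ((u x v - mval)^2 - (u y v - mval)^2)| := by
          rw [hEfundef]; rw [Finset.sum_sub_distrib]
    _ ≤ ∑ v, |(u x v - mval)^2 - (u y v - mval)^2| := Finset.abs_sum_le_sum_abs _ _
    _ ≤ ∑ _v : V, 2 * Bb * L * |x - y| := by
        apply Finset.sum_le_sum
        intro v _
        have hfac : (u x v - mval)^2 - (u y v - mval)^2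
            = (u x v - u y v) * ((u x v - mval) + (u y v - mval)) := by ring
        rw [hfac, abs_mul]
        have h1 : |u x v - u y v| ≤ (L:ℝ) * |x - y| := hcomp v x y hx.1 hy.1
        have h2 : |(u x v - mval) + (u y v - mval)| ≤ 2 * Bb := by
          calc |(u x v - mval) + (u y v - mval)| ≤ |u x v - mval| + |u y v - mval| := abs_add_le _ _
          _ ≤ 2 * Bb := by linarith [habs x hx v, habs y hy v]
        calc |u x v - u y v| * |(u x v - mval) + (u y v - mval)|
            ≤ ((L:ℝ) * |x - y|) * (2 * Bb) := by
              apply mul_le_mul h1 h2 (abs_nonneg _) (by positivity)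
        _ = 2 * Bb * L * |x - y| := by ring
    _ = (n * (2 * Bb * L)) * |x - y| := by
        rw [Finset.sum_const, Finset.card_univ, nsmul_eq_mul, hndef]; ring
  -- E is nonincreasing
  have hEmono : ∀ s t : ℝ, 0 ≤ s → s ≤ t → Efun t ≤ Efun s := by
    intro s t hs hst
    have hb : 0 ≤ t := hs.trans hst
    have h := growth_of_ae_deriv_le (g := Efun) (g' := E') (a := s) (b := t) (C := 0)
      (K := n * (2 * (‖f‖ + |mval| + L * t) * L)) hst (by positivity)
      (fun x hx y hy => hgE t hb x (Set.Icc_subset_Icc_left hs hx)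
        y (Set.Icc_subset_Icc_left hs hy)) ?_
    · linarith [h]
    · filter_upwards [hkey] with r hr hrIoo
      obtain ⟨_, hdE, hE'le⟩ := hr (hs.trans_lt hrIoo.1)
      exact ⟨hdE, hE'le.trans (by linarith [tvJ_nonneg E (u r)])⟩
  set F : ℝ → ℝ := fun s => Real.sqrt (Efun s) with hFdef
  set T1 : ℝ := F 0 / c with hT1def
  have hT1 : 0 ≤ T1 := div_nonneg (Real.sqrt_nonneg _) hc.le
  have hzero : ∃ t1, t1 ∈ Set.Icc 0 T1 ∧ Efun t1 = 0 := by
    by_contra hno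
    push_neg at hno
    have hpos : ∀ x ∈ Set.Icc (0:ℝ) T1, 0 < Efun x :=
      fun x hx => (hEnonneg x).lt_of_ne (Ne.symm (hno x hx))
    have hETpos : 0 < Efun T1 := hpos T1 ⟨hT1, le_rfl⟩
    have hElow : ∀ x ∈ Set.Icc (0:ℝ) T1, Efun T1 ≤ Efun x :=
      fun x hx => hEmono x T1 hx.1 hx.2
    set KE : ℝ := n * (2 * (‖f‖ + |mval| + L * T1) * L) with hKEdef
    have hKE : 0 ≤ KE := by positivity
    set sT : ℝ := Real.sqrt (Efun T1) with hsTdef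
    have hsT : 0 < sT := Real.sqrt_pos.2 hETpos
    have hgF : ∀ x ∈ Set.Icc (0:ℝ) T1, ∀ y ∈ Set.Icc (0:ℝ) T1,
        |F x - F y| ≤ (KE / (2 * sT)) * |x - y| := by
      intro x hx y hy
      set sx : ℝ := Real.sqrt (Efun x) with hsxdef
      set sy : ℝ := Real.sqrt (Efun y) with hsydef
      have hsxT : sT ≤ sx := Real.sqrt_le_sqrt (hElow x hx)
      have hsyT : sT ≤ sy := Real.sqrt_le_sqrt (hElow y hy)
      have hsum : 0 < sx + sy := by linarith
      have hid : (sx - sy) * (sx + sy) = Efun x - Efun y := by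
        have e1 : sx * sx = Efun x := Real.mul_self_sqrt (hEnonneg x)
        have e2 : sy * sy = Efun y := Real.mul_self_sqrt (hEnonneg y)
        linear_combination e1 - e2
      have hFx : F x = sx := rfl
      have hFy : F y = sy := rfl
      have habs2 : |F x - F y| = |Efun x - Efun y| / (sx + sy) := by
        rw [eq_div_iff hsum.ne']
        have hstep : |F x - F y| * (sx + sy) = |(sx - sy) * (sx + sy)| := by
          rw [hFx, hFy, abs_mul, abs_of_pos hsum]
        rw [hstep, hid]
      calc |F x - F y| = |Efun x - Efun y| / (sx + sy) := habs2
      _ ≤ (KE * |x - y|) / (2 * sT) := by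
          apply div_le_div₀ (by positivity) ?_ (by positivity) (by linarith)
          exact hgE T1 hT1 x hx y hy
      _ = (KE / (2 * sT)) * |x - y| := by ring
    have hFgrow := growth_of_ae_deriv_le (g := F)
        (g' := fun s => 1 / (2 * Real.sqrt (Efun s)) * E' s) (a := 0) (b := T1) (C := -c)
        hT1 (by positivity) hgF ?_
    · have hcT1 : c * T1 = F 0 := by
        rw [hT1def, mul_comm, div_mul_cancel₀ _ hc.ne']
      have hFT1 : 0 < F T1 := Real.sqrt_pos.2 hETpos
      rw [sub_zero] at hFgrow
      linarith [hFgrow, hFT1, hcT1]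
    · filter_upwards [hkey] with s hs hsIoo
      obtain ⟨_, hdE, hE'le⟩ := hs hsIoo.1
      have hEs : 0 < Efun s := hpos s ⟨hsIoo.1.le, hsIoo.2.le⟩
      have hss : 0 < Real.sqrt (Efun s) := Real.sqrt_pos.2 hEs
      constructor
      · have hder := (Real.hasDerivAt_sqrt hEs.ne').comp s hdE
        exact hder
      · have hJ : c * Real.sqrt (Efun s) ≤ tvJ E (u s) := by
          have h1 := hpoin (fun v => u s v - mval) (hsum_zero s hsIoo.1.le)
          rwa [tvJ_sub_const] at h1
        have h2 : E' s ≤ -2 * (c * Real.sqrt (Efun s)) := hE'le.trans (by linarith)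
        have h3 : 1 / (2 * Real.sqrt (Efun s)) * E' s
            ≤ 1 / (2 * Real.sqrt (Efun s)) * (-2 * (c * Real.sqrt (Efun s))) :=
          mul_le_mul_of_nonneg_left h2 (by positivity)
        have h4 : 1 / (2 * Real.sqrt (Efun s)) * (-2 * (c * Real.sqrt (Efun s))) = -c := by
          field_simp
        linarith
  obtain ⟨t1, ht1, hE1⟩ := hzero
  refine ⟨T1, hT1, ?_⟩
  intro t ht v
  have h1 : Efun t ≤ 0 := by
    have := hEmono t1 t ht1.1 (ht1.2.trans ht)
    rwa [hE1] at this
  have h2 : Efun t = 0 := le_antisymm h1 (hEnonneg t)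
  have h3 : (u t v - mval) ^ 2 = 0 :=
    (Finset.sum_eq_zero_iff_of_nonneg fun w _ => sq_nonneg _).1 h2 v (Finset.mem_univ v)
  have h4 : u t v = mval := by
    have := pow_eq_zero_iff (n := 2) (by norm_num) |>.1 h3
    linarith [sub_eq_zero.1 this]
  rw [h4, hmvaldef]
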